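/- Let H be a finite set of cardinality 2n, α a fixed-point-free involution of H, and σ a permutation of H such that γ = ασ is a single 2n-cycle. Then the number of cycles of σ plus twice the genus g equals n+1, where the genus g is defined by Euler's formula v = n + 1 - 2g with v the number of cycles of σ; equivalently, the quantity n + 1 - (number of cycles of σ) is a nonnegative even integer. -/

import Mathlib

open Equiv

/-- The number of cycles of a permutation (counting fixed points as cycles of
length one): the number of nontrivial cycles plus the number of fixed points. -/
noncomputable def cycleCount {H : Type*} [Fintype H] [DecidableEq H]
    (σ : Equiv.Perm H) : ℕ :=
  σ.cycleType.card + Fintype.card {x // σ x = x}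

set_option linter.unusedSectionVars false

namespace UnicellularAux

open Equiv.Perm

variable {H : Type*} [Fintype H] [DecidableEq H]

/-- The setoid of being in the same cycle of a permutation. -/
def scSetoid (y : Equiv.Perm H) : Setoid H :=
  ⟨y.SameCycle, ⟨fun x => Equiv.Perm.SameCycle.refl y x, Equiv.Perm.SameCycle.symm,
    Equiv.Perm.SameCycle.trans⟩⟩

lemma sameCycle_fixed_eq {y : Equiv.Perm H} {x x' : H} (h : y.SameCycle x x')
    (hx : y x = x) : x' = x := by
  obtain ⟨i, rfl⟩ := h
  exact Equiv.Perm.zpow_apply_eq_self_of_apply_eq_self hx i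

lemma cycleCount_eq_card_quot (y : Equiv.Perm H) :
    cycleCount y = Nat.card (Quotient (scSetoid y)) := by
  classical
  have hwd : ∀ (x x' : H), y.SameCycle x x' →
      (if h : y x = x then (Sum.inr ⟨x, h⟩ : {c // c ∈ y.cycleFactorsFinset} ⊕ {x : H // y x = x})
       else Sum.inl ⟨y.cycleOf x, (Equiv.Perm.cycleOf_mem_cycleFactorsFinset_iff).mpr
          (Equiv.Perm.mem_support.mpr h)⟩) =
      (if h : y x' = x' then (Sum.inr ⟨x', h⟩)
       else Sum.inl ⟨y.cycleOf x', (Equiv.Perm.cycleOf_mem_cycleFactorsFinset_iff).mpr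
          (Equiv.Perm.mem_support.mpr h)⟩) := by
    intro x x' h
    by_cases hx : y x = x
    · have hxx : x' = x := sameCycle_fixed_eq h hx
      subst hxx; rfl
    · have hx' : ¬ y x' = x' := by
        intro hx'
        have hxx : x = x' := sameCycle_fixed_eq h.symm hx'
        rw [hxx] at hx; exact hx hx'
      rw [dif_neg hx, dif_neg hx']
      congr 1
      exact Subtype.ext h.cycleOf_eq
  let F : Quotient (scSetoid y) → ({c // c ∈ y.cycleFactorsFinset} ⊕ {x : H // y x = x}) :=
    Quotient.lift _ (fun a b hab => hwd a b hab)
  have hbij : Function.Bijective F := by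
    constructor
    · intro q q'
      induction q using Quotient.ind
      induction q' using Quotient.ind
      rename_i x x'
      intro h
      apply Quotient.sound
      change F (Quotient.mk _ x) = F (Quotient.mk _ x') at h
      by_cases hx : y x = x <;> by_cases hx' : y x' = x' <;>
        simp only [F, Quotient.lift_mk, dif_pos, dif_neg, hx, hx'] at h
      · cases h
        exact Equiv.Perm.SameCycle.refl y x
      · exact absurd h (by simp)
      · exact absurd h (by simp)
      · have hc : y.cycleOf x = y.cycleOf x' := congrArg Subtype.val (Sum.inl.inj h)
        have : x' ∈ (y.cycleOf x').support :=
          Equiv.Perm.mem_support_cycleOf_iff.mpr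
            ⟨Equiv.Perm.SameCycle.refl y x', Equiv.Perm.mem_support.mpr hx'⟩
        rw [← hc] at this
        exact (Equiv.Perm.mem_support_cycleOf_iff.mp this).1
    · rintro (⟨c, hc⟩ | ⟨x, hx⟩)
      · obtain ⟨hcyc, hsupp⟩ := Equiv.Perm.mem_cycleFactorsFinset_iff.mp hc
        obtain ⟨x, hx, -⟩ := hcyc
        have hxs : x ∈ c.support := Equiv.Perm.mem_support.mpr hx
        have hyx : y x ≠ x := by rw [← hsupp x hxs]; exact hx
        refine ⟨Quotient.mk _ x, ?_⟩
        show (if h : y x = x then _ else _) = _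
        rw [dif_neg hyx]
        congr 1
        exact Subtype.ext (Equiv.Perm.cycle_is_cycleOf hxs hc).symm
      · refine ⟨Quotient.mk _ x, ?_⟩
        show (if h : y x = x then _ else _) = _
        rw [dif_pos hx]
  rw [Nat.card_congr (Equiv.ofBijective F hbij), Nat.card_sum]
  rw [cycleCount, Nat.card_eq_finsetCard, Nat.card_eq_fintype_card]
  congr 1
  rw [cycleType_def, Multiset.card_map]
  rfl

end UnicellularAux

namespace UnicellularAux2

lemma card_le_card_add_one {A B : Type*} [Fintype A] [Fintype B] (f : A → B) (p q : A)
    (hf : ∀ u v, f u = f v → u = v ∨ (u = p ∧ v = q) ∨ (u = q ∧ v = p)) :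
    Fintype.card A ≤ Fintype.card B + 1 := by
  classical
  have hinj : Set.InjOn f ↑(Finset.univ.erase p) := by
    intro u hu v hv huv
    rcases hf u v huv with h | ⟨h, -⟩ | ⟨-, h⟩
    · exact h
    · exact absurd h (by simpa using hu)
    · exact absurd h (by simpa using hv)
  have h1 : (Finset.univ.erase p).card ≤ Fintype.card B := by
    have := Finset.card_le_card_of_injOn f (fun a _ => Finset.mem_univ (f a)) hinj
    simpa using this
  have h2 : (Finset.univ.erase p).card = Fintype.card A - 1 := by
    rw [Finset.card_erase_of_mem (Finset.mem_univ p)]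
    rfl
  have h3 : 1 ≤ Fintype.card A := Fintype.card_pos_iff.mpr ⟨p⟩
  omega

variable {H : Type*} [Fintype H] [DecidableEq H]

open Equiv.Perm UnicellularAux

lemma nat_card_le_card_add_one {A B : Type*} [Finite A] [Finite B] (f : A → B) (p q : A)
    (hf : ∀ u v, f u = f v → u = v ∨ (u = p ∧ v = q) ∨ (u = q ∧ v = p)) :
    Nat.card A ≤ Nat.card B + 1 := by
  cases nonempty_fintype A
  cases nonempty_fintype B
  rw [Nat.card_eq_fintype_card, Nat.card_eq_fintype_card]
  exact card_le_card_add_one f p q hf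

variable {H : Type*} [Fintype H] [DecidableEq H]
open Equiv.Perm UnicellularAux

lemma key_swap (w : Equiv.Perm H) (a b : H) :
    Nat.card (Quotient (scSetoid w)) ≤
      Nat.card (Quotient (scSetoid (Equiv.swap a b * w))) + 1 := by
  classical
  set z := Equiv.swap a b * w with hzdef
  set r := w.SameCycle with hrdef
  let S : H → H → Prop := fun c d => r c d ∨ (r c a ∧ r b d) ∨ (r c b ∧ r a d)
  have rrefl : ∀ c, r c c := fun c => Equiv.Perm.SameCycle.refl w c
  have Srefl : ∀ c, S c c := fun c => Or.inl (rrefl c)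
  have Ssymm : ∀ {c d}, S c d → S d c := by
    rintro c d (h | ⟨h1, h2⟩ | ⟨h1, h2⟩)
    · exact Or.inl h.symm
    · exact Or.inr (Or.inr ⟨h2.symm, h1.symm⟩)
    · exact Or.inr (Or.inl ⟨h2.symm, h1.symm⟩)
  have Strans : ∀ {c d e}, S c d → S d e → S c e := by
    rintro c d e (h | ⟨h1, h2⟩ | ⟨h1, h2⟩) (g | ⟨g1, g2⟩ | ⟨g1, g2⟩)
    · exact Or.inl (h.trans g)
    · exact Or.inr (Or.inl ⟨h.trans g1, g2⟩)
    · exact Or.inr (Or.inr ⟨h.trans g1, g2⟩)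
    · exact Or.inr (Or.inl ⟨h1, h2.trans g⟩)
    · exact Or.inl (h1.trans ((h2.trans g1).symm.trans g2))
    · exact Or.inl (h1.trans g2)
    · exact Or.inr (Or.inr ⟨h1, h2.trans g⟩)
    · exact Or.inl (h1.trans g2)
    · exact Or.inl (h1.trans ((h2.trans g1).symm.trans g2))
  let Sst : Setoid H := ⟨S, ⟨Srefl, fun h => Ssymm h, fun h g => Strans h g⟩⟩
  have hstep : ∀ c, S c (z c) := by
    intro c
    have hc : r c (w c) := ⟨1, by simp⟩
    have hzc : z c = Equiv.swap a b (w c) := rfl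
    rcases eq_or_ne (w c) a with h | ha'
    · rw [hzc, h, Equiv.swap_apply_left]
      exact Or.inr (Or.inl ⟨h ▸ hc, rrefl b⟩)
    · rcases eq_or_ne (w c) b with h | hb'
      · rw [hzc, h, Equiv.swap_apply_right]
        exact Or.inr (Or.inr ⟨h ▸ hc, rrefl a⟩)
      · rw [hzc, Equiv.swap_apply_of_ne_of_ne ha' hb']
        exact Or.inl hc
  have hzpow : ∀ i : ℤ, ∀ c, S c ((z ^ i) c) := by
    intro i
    induction i using Int.induction_on with
    | zero => simpa using fun c => Srefl c
    | succ i ih =>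
        intro c
        have he : (z ^ ((i : ℤ) + 1)) c = (z ^ (i : ℤ)) (z c) := by
          rw [zpow_add_one]
          rfl
        rw [he]
        exact Strans (hstep c) (ih (z c))
    | pred i ih =>
        intro c
        have he : (z ^ (-(i : ℤ) - 1)) c = (z ^ (-i : ℤ)) (z⁻¹ c) := by
          rw [zpow_sub_one]
          rfl
        have hinv : S c (z⁻¹ c) := by
          have := hstep (z⁻¹ c)
          rw [show z (z⁻¹ c) = c from z.apply_symm_apply c] at this
          exact Ssymm this
        rw [he]
        exact Strans hinv (ih (z⁻¹ c))
  have hle : ∀ c d, z.SameCycle c d → S c d := by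
    rintro c d ⟨i, rfl⟩
    exact hzpow i c
  let f1 : Quotient (scSetoid z) → Quotient Sst :=
    Quotient.lift (fun x => Quotient.mk Sst x) (fun u v huv => Quotient.sound (hle u v huv))
  have hsurj : Function.Surjective f1 := by
    intro q
    induction q using Quotient.ind
    rename_i x
    exact ⟨Quotient.mk _ x, rfl⟩
  have h1 : Nat.card (Quotient Sst) ≤ Nat.card (Quotient (scSetoid z)) :=
    Nat.card_le_card_of_surjective f1 hsurj
  let f2 : Quotient (scSetoid w) → Quotient Sst :=
    Quotient.lift (fun x => Quotient.mk Sst x) (fun u v huv => Quotient.sound (Or.inl huv))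
  have h2 : Nat.card (Quotient (scSetoid w)) ≤ Nat.card (Quotient Sst) + 1 := by
    apply nat_card_le_card_add_one f2 (Quotient.mk _ a) (Quotient.mk _ b)
    intro u v
    induction u using Quotient.ind
    induction v using Quotient.ind
    rename_i u v
    intro huv
    have hS : S u v := Quotient.exact huv
    rcases hS with h | ⟨h1', h2'⟩ | ⟨h1', h2'⟩
    · exact Or.inl (Quotient.sound h)
    · exact Or.inr (Or.inl ⟨Quotient.sound h1', Quotient.sound h2'.symm⟩)
    · exact Or.inr (Or.inr ⟨Quotient.sound h1', Quotient.sound h2'.symm⟩)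
  omega

end UnicellularAux2

namespace UnicellularAux3
variable {H : Type*} [Fintype H] [DecidableEq H]
open Equiv.Perm UnicellularAux UnicellularAux2

lemma cycleCount_le_swap_mul (w : Equiv.Perm H) (a b : H) :
    cycleCount w ≤ cycleCount (Equiv.swap a b * w) + 1 := by
  rw [cycleCount_eq_card_quot, cycleCount_eq_card_quot]
  exact key_swap w a b

lemma cycleCount_le_noncommProd_mul (σ0 : Equiv.Perm H) (s : Finset (Equiv.Perm H))
    (comm : (s : Set (Equiv.Perm H)).Pairwise (fun a b => Commute (id a) (id b)))
    (hs : ∀ τ ∈ s, τ.IsSwap) :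
    cycleCount σ0 ≤ cycleCount (s.noncommProd id comm * σ0) + s.card := by
  classical
  induction s using Finset.cons_induction with
  | empty => rw [Finset.noncommProd_empty]; simp
  | cons a s ha ih =>
      have hcomm : (s : Set (Equiv.Perm H)).Pairwise (fun a b => Commute (id a) (id b)) :=
        comm.mono (Finset.coe_subset.mpr (Finset.subset_cons ha))
      have hA : cycleCount σ0 ≤ cycleCount (s.noncommProd id hcomm * σ0) + s.card :=
        ih hcomm (fun τ hτ => hs τ (Finset.mem_cons.mpr (Or.inr hτ)))
      obtain ⟨x, y, hxy, hswap⟩ := hs a (Finset.mem_cons_self a s)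
      have hprod : (Finset.cons a s ha).noncommProd id comm =
          a * s.noncommProd id hcomm := by
        rw [Finset.noncommProd_cons]
        rfl
      rw [hprod, Finset.card_cons, mul_assoc]
      have := cycleCount_le_swap_mul (s.noncommProd id hcomm * σ0) x y
      rw [← hswap] at this
      omega

end UnicellularAux3


open UnicellularAux UnicellularAux2 UnicellularAux3

/-- for a unicellular map `(H, α, σ)` of size `n` (so `|H| = 2n`,
`α` a fixed-point-free involution, and `γ = ασ` a single `2n`-cycle), the
quantity `n + 1 - (number of cycles of σ)` is a nonnegative even integer, i.e.
there is a genus `g` with `(number of cycles of σ) + 2g = n + 1`. -/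
theorem unicellular_genus_exists {H : Type*} [Fintype H] [DecidableEq H]
    (n : ℕ) (hcard : Fintype.card H = 2 * n)
    (α σ : Equiv.Perm H)
    (hinv : α * α = 1) (hfp : ∀ h : H, α h ≠ h)
    (hface : (α * σ).IsCycle ∧ (α * σ).support = Finset.univ) :
    ∃ g : ℕ, cycleCount σ + 2 * g = n + 1 := by
  classical
  obtain ⟨hcyc, hsupp⟩ := hface
  obtain ⟨x0, hx0, -⟩ := id hcyc
  have hα1 : α ≠ 1 := by
    intro h
    exact hfp x0 (by rw [h]; rfl)
  have horder : orderOf α = 2 := orderOf_eq_prime (by rw [pow_two]; exact hinv) hα1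
  obtain ⟨m, hm⟩ := Equiv.Perm.cycleType_prime_order (by rw [horder]; exact Nat.prime_two)
  rw [horder] at hm
  have hsuppα : α.support = Finset.univ := by
    ext h
    simp [Equiv.Perm.mem_support, hfp h]
  have hsum : α.cycleType.sum = 2 * n := by
    rw [Equiv.Perm.sum_cycleType, hsuppα]
    simpa using hcard
  have hmn : m + 1 = n := by
    rw [hm] at hsum
    simp [Multiset.sum_replicate] at hsum
    omega
  have hm' : α.cycleType = Multiset.replicate n 2 := by rw [hm, hmn]
  have hfact : ∀ c ∈ α.cycleFactorsFinset, c.IsSwap := by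
    intro c hc
    have hmem : c.support.card ∈ α.cycleType := by
      rw [Equiv.Perm.cycleType_def]
      exact Multiset.mem_map.mpr ⟨c, hc, rfl⟩
    rw [hm'] at hmem
    exact Equiv.Perm.card_support_eq_two.mp (Multiset.eq_of_mem_replicate hmem)
  have hcardfact : α.cycleFactorsFinset.card = n := by
    have h1 : Multiset.card α.cycleType = n := by rw [hm']; simp
    rw [Equiv.Perm.cycleType_def, Multiset.card_map] at h1
    exact h1
  have hineq : cycleCount σ ≤ cycleCount (α * σ) + n := by
    have h := cycleCount_le_noncommProd_mul σ α.cycleFactorsFinset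
      (Equiv.Perm.cycleFactorsFinset_mem_commute α) hfact
    rwa [Equiv.Perm.cycleFactorsFinset_noncommProd, hcardfact] at h
  have hccγ : cycleCount (α * σ) = 1 := by
    have hct : Multiset.card (α * σ).cycleType = 1 := Equiv.Perm.card_cycleType_eq_one.mpr hcyc
    have hfix : Fintype.card {x // (α * σ) x = x} = 0 := by
      rw [Fintype.card_eq_zero_iff]
      constructor
      rintro ⟨x, hx⟩
      have hxs : x ∈ (α * σ).support := by rw [hsupp]; exact Finset.mem_univ x
      exact (Equiv.Perm.mem_support.mp hxs) hx
    rw [cycleCount, hct, hfix]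
  rw [hccγ] at hineq
  -- parity via sign
  have hsignγ : Equiv.Perm.sign (α * σ) = -1 := by
    rw [hcyc.sign, hsupp]
    have hcu : (Finset.univ : Finset H).card = 2 * n := by simpa using hcard
    rw [hcu, pow_mul]
    norm_num
  have hsignα : Equiv.Perm.sign α = (-1 : ℤˣ) ^ (n * 2 + n) := by
    rw [Equiv.Perm.sign_of_cycleType, hm']
    simp [Multiset.sum_replicate, Multiset.card_replicate, smul_eq_mul]
  have hsignσ : Equiv.Perm.sign σ = (-1 : ℤˣ) ^ (σ.cycleType.sum + Multiset.card σ.cycleType) :=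
    Equiv.Perm.sign_of_cycleType σ
  have hkey : (-1 : ℤˣ) ^ (n * 2 + n + (σ.cycleType.sum + Multiset.card σ.cycleType)) = -1 := by
    rw [pow_add, ← hsignα, ← hsignσ, ← map_mul, hsignγ]
  have hodd : (n * 2 + n + (σ.cycleType.sum + Multiset.card σ.cycleType)) % 2 = 1 := by
    rcases Nat.even_or_odd (n * 2 + n + (σ.cycleType.sum + Multiset.card σ.cycleType)) with he | ho
    · rw [he.neg_one_pow] at hkey
      exact absurd hkey (by decide)
    · exact Nat.odd_iff.mp ho
  have hfixσ : Fintype.card {x // σ x = x} + σ.support.card = 2 * n := by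
    rw [Fintype.card_subtype]
    have hs : σ.support = Finset.univ.filter (fun x => ¬ σ x = x) := by
      ext x
      simp [Equiv.Perm.mem_support]
    rw [hs, Finset.card_filter_add_card_filter_not]
    simpa using hcard
  have hsumσ : σ.cycleType.sum = σ.support.card := Equiv.Perm.sum_cycleType σ
  have hcc : cycleCount σ = Multiset.card σ.cycleType + Fintype.card {x // σ x = x} := rfl
  refine ⟨(n + 1 - cycleCount σ) / 2, ?_⟩
  omega
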